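/- Let P_t (t ∈ ℕ) be symmetric positive definite matrices, γ_t > 0, and suppose for each t the one-step inequality x(t+1)ᵀP_t x(t+1) - x(t)ᵀP_t x(t) ≤ -‖y₁(t)‖² + γ_t² ‖w(t)‖² holds. Define Δ₁ = 0 and Δ_{t+1} = Δ_t - (x(t)ᵀP_t x(t) - x(t)ᵀP_{t-1}x(t)) for t ≥ 1, and suppose x(t)ᵀP_t x(t) - x(t)ᵀP_{t-1}x(t) ≤ Δ_t for all t ≥ 1. Then for all t ∈ ℕ, Σ_{i=0}^t ‖y₁(i)‖² ≤ γ̄_t² Σ_{i=0}^t ‖w(i)‖² + x(0)ᵀP₀x(0), where γ̄_t = max{γ₀, γ₁, …, γ_t}. -/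

import Mathlib

open Matrix

theorem stmt3 {n p₁ : ℕ}
    (P : ℕ → Matrix (Fin n) (Fin n) ℝ) (hP : ∀ t, (P t).PosDef)
    (γ : ℕ → ℝ) (hγ : ∀ t, 0 < γ t)
    (x : ℕ → Fin n → ℝ) (y₁ : ℕ → Fin p₁ → ℝ) (w : ℕ → Fin n → ℝ)
    (hdiss : ∀ t, x (t + 1) ⬝ᵥ (P t).mulVec (x (t + 1)) - x t ⬝ᵥ (P t).mulVec (x t) ≤
      -(∑ i, (y₁ t i) ^ 2) + (γ t) ^ 2 * ∑ i, (w t i) ^ 2)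
    (Δ : ℕ → ℝ) (hΔ1 : Δ 1 = 0)
    (hΔrec : ∀ t ≥ 1, Δ (t + 1) = Δ t -
      (x t ⬝ᵥ (P t).mulVec (x t) - x t ⬝ᵥ (P (t - 1)).mulVec (x t)))
    (hslack : ∀ t ≥ 1, x t ⬝ᵥ (P t).mulVec (x t) - x t ⬝ᵥ (P (t - 1)).mulVec (x t) ≤ Δ t) :
    ∀ t, ∑ i ∈ Finset.range (t + 1), ∑ j, (y₁ i j) ^ 2 ≤
      ((Finset.range (t + 1)).sup' (by simp) γ) ^ 2 *
        ∑ i ∈ Finset.range (t + 1), ∑ j, (w i j) ^ 2 +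
        x 0 ⬝ᵥ (P 0).mulVec (x 0) := by
  have hpsd : ∀ s (v : Fin n → ℝ), 0 ≤ v ⬝ᵥ (P s).mulVec v := by
    intro s v
    have := (hP s).posSemidef.dotProduct_mulVec_nonneg v
    simpa using this
  have key : ∀ t, ∑ i ∈ Finset.range (t + 1), ∑ j, (y₁ i j) ^ 2
      + x (t + 1) ⬝ᵥ (P t).mulVec (x (t + 1)) + Δ (t + 1)
      ≤ ∑ i ∈ Finset.range (t + 1), (γ i) ^ 2 * ∑ j, (w i j) ^ 2
        + x 0 ⬝ᵥ (P 0).mulVec (x 0) := by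
    intro t
    induction t with
    | zero =>
      simp only [zero_add, Finset.sum_range_one, hΔ1]
      have := hdiss 0
      linarith
    | succ t ih =>
      rw [Finset.sum_range_succ, Finset.sum_range_succ (f := fun i => (γ i) ^ 2 * ∑ j, (w i j) ^ 2)]
      have h1 := hdiss (t + 1)
      have h2 := hΔrec (t + 1) (by omega)
      simp only [Nat.add_sub_cancel] at h2
      linarith
  have hΔnn : ∀ t, 0 ≤ Δ (t + 1) := by
    intro t
    induction t with
    | zero => simp [hΔ1]
    | succ t ih =>
      rw [hΔrec (t + 1) (by omega)]
      have h := hslack (t + 1) (by omega)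
      simp only [Nat.add_sub_cancel] at h ⊢
      linarith
  intro t
  have hsum : ∑ i ∈ Finset.range (t + 1), (γ i) ^ 2 * ∑ j, (w i j) ^ 2
      ≤ ((Finset.range (t + 1)).sup' (by simp) γ) ^ 2 *
        ∑ i ∈ Finset.range (t + 1), ∑ j, (w i j) ^ 2 := by
    rw [Finset.mul_sum]
    apply Finset.sum_le_sum
    intro i hi
    apply mul_le_mul_of_nonneg_right
    · exact pow_le_pow_left₀ (hγ i).le (Finset.le_sup' γ hi) 2
    · exact Finset.sum_nonneg fun j _ => sq_nonneg _
  have h1 := key t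
  have h2 := hΔnn t
  have h3 := hpsd t (x (t + 1))
  linarith
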